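/- Let L be a list of jobs, each job having processing times (a, b) ∈ ℕ × ℕ with a ≤ b, and suppose two adjacent jobs J_i = (a_i, b_i) and J_j = (a_j, b_j) in L satisfy a_i ≤ a_j. Then the makespan of the list obtained from L by swapping J_i and J_j so that J_i is scheduled immediately before J_j is less than or equal to the makespan of the list with J_j immediately before J_i (the other jobs and their positions being fixed). -/

import Mathlib

/-- Two-machine flow shop makespan of a list of jobs `(a, b)`, via the formula
`C_max = max_{1 ≤ k ≤ m} (∑_{i=1}^k a_i + ∑_{j=k}^m b_j)` (position `k`
corresponds to `k + 1` with `k ∈ range m` zero-based). -/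
def makespan (L : List (ℕ × ℕ)) : ℕ :=
  (Finset.range L.length).sup
    (fun k => ((L.take (k + 1)).map Prod.fst).sum + ((L.drop k).map Prod.snd).sum)

private lemma F_at_n (L1 L2 : List (ℕ × ℕ)) (p q : ℕ × ℕ) :
    (((L1 ++ [p, q] ++ L2).take (L1.length + 1)).map Prod.fst).sum
      + (((L1 ++ [p, q] ++ L2).drop L1.length).map Prod.snd).sum
    = (L1.map Prod.fst).sum + p.1
      + (p.2 + (q.2 + (L2.map Prod.snd).sum)) := by
  rw [List.append_assoc, List.take_length_add_append, List.drop_left]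
  simp

private lemma F_at_n1 (L1 L2 : List (ℕ × ℕ)) (p q : ℕ × ℕ) :
    (((L1 ++ [p, q] ++ L2).take (L1.length + 1 + 1)).map Prod.fst).sum
      + (((L1 ++ [p, q] ++ L2).drop (L1.length + 1)).map Prod.snd).sum
    = (L1.map Prod.fst).sum + (p.1 + q.1)
      + (q.2 + (L2.map Prod.snd).sum) := by
  rw [List.append_assoc, show L1.length + 1 + 1 = L1.length + 2 from rfl,
    List.take_length_add_append, List.drop_length_add_append]
  simp

private lemma F_late (L1 L2 : List (ℕ × ℕ)) (p q : ℕ × ℕ) (j : ℕ) :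
    (((L1 ++ [p, q] ++ L2).take (L1.length + 2 + j + 1)).map Prod.fst).sum
      + (((L1 ++ [p, q] ++ L2).drop (L1.length + 2 + j)).map Prod.snd).sum
    = (L1.map Prod.fst).sum + (p.1 + q.1) + ((L2.take (j + 1)).map Prod.fst).sum
      + ((L2.drop j).map Prod.snd).sum := by
  have h1 : L1.length + 2 + j + 1 = (L1 ++ [p, q]).length + (j + 1) := by simp only [List.length_append, List.length_cons, List.length_nil]; try omega
  have h2 : L1.length + 2 + j = (L1 ++ [p, q]).length + j := by simp only [List.length_append, List.length_cons, List.length_nil]; try omega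
  rw [h1, h2, List.take_length_add_append, List.drop_length_add_append]
  simp [add_assoc]

/-- If every job of the list satisfies `a ≤ b`, and two adjacent
jobs `(ai, bi)`, `(aj, bj)` satisfy `ai ≤ aj`, then scheduling `(ai, bi)`
immediately before `(aj, bj)` yields a makespan no larger than the reverse
adjacent order (all other jobs fixed). -/
theorem adjacent_swap_le (L1 L2 : List (ℕ × ℕ)) (ai bi aj bj : ℕ)
    (hall : ∀ p ∈ L1 ++ [(ai, bi), (aj, bj)] ++ L2, p.1 ≤ p.2)
    (hij : ai ≤ aj) :
    makespan (L1 ++ [(ai, bi), (aj, bj)] ++ L2)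
      ≤ makespan (L1 ++ [(aj, bj), (ai, bi)] ++ L2) := by
  have hai : ai ≤ bi := hall (ai, bi) (by simp)
  set Y := L1 ++ [(aj, bj), (ai, bi)] ++ L2 with hY
  have hle : ∀ k, k < Y.length →
      ((Y.take (k + 1)).map Prod.fst).sum + ((Y.drop k).map Prod.snd).sum ≤ makespan Y := by
    intro k hk
    exact Finset.le_sup (f := fun k =>
      ((Y.take (k + 1)).map Prod.fst).sum + ((Y.drop k).map Prod.snd).sum)
      (Finset.mem_range.mpr hk)
  have hlenY : Y.length = L1.length + 2 + L2.length := by simp [hY]; omega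
  apply Finset.sup_le
  intro k hk
  simp only [Finset.mem_range, List.length_append, List.length_cons, List.length_nil] at hk
  rcases lt_trichotomy k L1.length with h | h | h
  · have hn := hle k (by omega)
    have e1 : k + 1 - L1.length = 0 := by omega
    have e2 : k - L1.length = 0 := by omega
    simp only [hY, List.take_append, List.drop_append,
      List.map_append, List.sum_append] at hn ⊢
    simp [e1, e2] at hn ⊢
    omega
  · subst h
    have hn1 := hle L1.length (by omega)
    rw [hY, F_at_n, ← hY] at hn1
    rw [F_at_n]
    simp only at hn1 ⊢
    omega
  · have hn1 := hle L1.length (by omega)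
    rw [hY, F_at_n, ← hY] at hn1
    rcases Nat.lt_or_ge k (L1.length + 2) with h2 | h2
    · have hk1 : k = L1.length + 1 := by omega
      subst hk1
      rw [F_at_n1]
      simp only at hn1 ⊢
      omega
    · obtain ⟨j, rfl⟩ : ∃ j, k = L1.length + 2 + j := ⟨k - (L1.length + 2), by omega⟩
      have hn := hle (L1.length + 2 + j) (by omega)
      rw [hY, F_late, ← hY] at hn
      rw [F_late]
      simp only at hn ⊢
      omega
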